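/- Let H be an ICC group, K a group, and γ, γ' : K → H injective group homomorphisms whose images γ(K) and γ'(K) have finite index in H. Let a, a' be positive integers and ρ : K → U_a(ℂ), ρ' : K → U_{a'}(ℂ) unitary representations that are irreducible, in the sense that every a×a complex matrix T with ρ(g) T = T ρ(g) for all g ∈ K is a scalar multiple of the identity, and likewise for ρ'. Suppose x : H → M_{a×a'}(ℂ) satisfies ∑_{h ∈ H} ‖x(h)‖² < ∞ (Frobenius norm), x is not identically zero, and x(γ(g) h γ'(g)⁻¹) = ρ(g) · x(h) · ρ'(g)* for every g ∈ K and h ∈ H. Then a = a', there is exactly one h₀ ∈ H with x(h₀) ≠ 0, and there exist a nonzero scalar c ∈ ℂ and a unitary matrix U ∈ U_a(ℂ) such that x(h₀) = c U, γ(g) h₀ = h₀ γ'(g) for every g ∈ K, and ρ(g) U = U ρ'(g) for every g ∈ K. -/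

import Mathlib

open Matrix

private lemma traceAux {a a' : ℕ} (M : Matrix (Fin a) (Fin a') ℂ) :
    Matrix.trace (M * M.conjTranspose) = ((∑ i, ∑ j, ‖M i j‖^2 : ℝ) : ℂ) := by
  simp only [Matrix.trace, Matrix.mul_apply, Matrix.conjTranspose_apply, Matrix.diag,
    Complex.ofReal_sum]
  refine Finset.sum_congr rfl fun i _ => Finset.sum_congr rfl fun j _ => ?_
  rw [show star (M i j) = (starRingEnd ℂ) (M i j) from rfl, Complex.mul_conj,
    Complex.normSq_eq_norm_sq, Complex.ofReal_pow]

private lemma normAux {a a' : ℕ} (M : Matrix (Fin a) (Fin a') ℂ)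
    (u : Matrix (Fin a) (Fin a) ℂ) (v : Matrix (Fin a') (Fin a') ℂ)
    (hu : u ∈ Matrix.unitaryGroup (Fin a) ℂ) (hv : v ∈ Matrix.unitaryGroup (Fin a') ℂ) :
    (∑ i, ∑ j, ‖(u * M * star v) i j‖^2 : ℝ) = ∑ i, ∑ j, ‖M i j‖^2 := by
  have hv1 : vᴴ * v = 1 := by
    have := Matrix.mem_unitaryGroup_iff'.mp hv
    rwa [Matrix.star_eq_conjTranspose] at this
  have hu1 : uᴴ * u = 1 := by
    have := Matrix.mem_unitaryGroup_iff'.mp hu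
    rwa [Matrix.star_eq_conjTranspose] at this
  have e1 : (u * M * star v) * (u * M * star v)ᴴ = u * (M * Mᴴ) * uᴴ := by
    rw [Matrix.star_eq_conjTranspose, Matrix.conjTranspose_mul, Matrix.conjTranspose_mul,
      Matrix.conjTranspose_conjTranspose]
    calc u * M * vᴴ * (v * (Mᴴ * uᴴ)) = u * M * (vᴴ * v) * (Mᴴ * uᴴ) := by
          rw [← Matrix.mul_assoc, Matrix.mul_assoc (u * M)]
      _ = u * (M * Mᴴ) * uᴴ := by
          rw [hv1, Matrix.mul_one]
          simp [Matrix.mul_assoc]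
  have key : Matrix.trace ((u * M * star v) * (u * M * star v)ᴴ)
      = Matrix.trace (M * Mᴴ) := by
    rw [e1, Matrix.trace_mul_comm (u * (M * Mᴴ)) uᴴ, ← Matrix.mul_assoc, hu1, Matrix.one_mul]
  have := (traceAux (u * M * star v)).symm.trans (key.trans (traceAux M))
  exact_mod_cast this

private lemma mapFiniteIndexAux {K H : Type*} [Group K] [Group H] (f : K →* H)
    (hf : Function.Injective f) (hfr : f.range.FiniteIndex) (L : Subgroup K)
    (hL : L.FiniteIndex) : (L.map f).FiniteIndex := by
  constructor
  rw [Subgroup.index_map, (MonoidHom.ker_eq_bot_iff f).mpr hf, sup_bot_eq]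
  exact mul_ne_zero hL.index_ne_zero hfr.index_ne_zero

private lemma conjClassFiniteAux {H : Type*} [Group H] (C : Subgroup H)
    (hC : C.FiniteIndex) (d : H) (hcomm : ∀ c ∈ C, c * d = d * c) :
    {x : H | ∃ y : H, x = y * d * y⁻¹}.Finite := by
  haveI := hC
  haveI : Finite (H ⧸ C) := inferInstance
  have wd : ∀ y z : H, (QuotientGroup.leftRel C) y z → y * d * y⁻¹ = z * d * z⁻¹ := by
    intro y z hyz
    rw [QuotientGroup.leftRel_apply] at hyz
    have hz : z = y * (y⁻¹ * z) := by group
    have hcd : (y⁻¹ * z) * d * (y⁻¹ * z)⁻¹ = d := by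
      rw [hcomm _ hyz]; group
    calc y * d * y⁻¹ = y * ((y⁻¹ * z) * d * (y⁻¹ * z)⁻¹) * y⁻¹ := by rw [hcd]
      _ = z * d * z⁻¹ := by rw [hz]; group
  let F : H ⧸ C → H := Quotient.lift (fun y => y * d * y⁻¹) wd
  have hsub : {x : H | ∃ y : H, x = y * d * y⁻¹} ⊆ Set.range F := by
    rintro x ⟨y, rfl⟩
    exact ⟨QuotientGroup.mk y, rfl⟩
  exact (Set.finite_range F).subset hsub

/-- (Claim on intertwiners.) Let `H` be an ICC group, `K` a group, and
`γ, γ' : K → H` injective homomorphisms with finite index images. Let `ρ, ρ'` be irreducible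
unitary representations of `K` of dimensions `a, a'`. If `x : H → M_{a×a'}(ℂ)` is
square-summable (Frobenius norm), nonzero, and satisfies
`x (γ g * h * γ' g⁻¹) = ρ g * x h * (ρ' g)*` for all `g, h`, then `a = a'`, `x` is supported
at a single `h₀`, `x h₀` is a nonzero scalar multiple of a unitary `U`, `h₀` intertwines
`γ` and `γ'`, and `U` intertwines `ρ` and `ρ'`. -/
theorem icc_intertwiner_structure
    {H K : Type*} [Group H] [Group K]
    (hicc : ∀ h : H, h ≠ 1 → {x : H | ∃ y : H, x = y * h * y⁻¹}.Infinite)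
    {a a' : ℕ} (ha : 0 < a) (ha' : 0 < a')
    (γ γ' : K →* H)
    (hγinj : Function.Injective γ) (hγ'inj : Function.Injective γ')
    (hγ : γ.range.FiniteIndex) (hγ' : γ'.range.FiniteIndex)
    (ρ : K →* Matrix.unitaryGroup (Fin a) ℂ)
    (ρ' : K →* Matrix.unitaryGroup (Fin a') ℂ)
    (hirr : ∀ T : Matrix (Fin a) (Fin a) ℂ,
      (∀ g : K, (ρ g : Matrix (Fin a) (Fin a) ℂ) * T = T * (ρ g : Matrix (Fin a) (Fin a) ℂ)) →
      ∃ c : ℂ, T = c • (1 : Matrix (Fin a) (Fin a) ℂ))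
    (hirr' : ∀ T : Matrix (Fin a') (Fin a') ℂ,
      (∀ g : K, (ρ' g : Matrix (Fin a') (Fin a') ℂ) * T
          = T * (ρ' g : Matrix (Fin a') (Fin a') ℂ)) →
      ∃ c : ℂ, T = c • (1 : Matrix (Fin a') (Fin a') ℂ))
    (x : H → Matrix (Fin a) (Fin a') ℂ)
    (hsum : Summable fun h : H => ∑ i : Fin a, ∑ j : Fin a', ‖x h i j‖ ^ 2)
    (hxne : x ≠ 0)
    (hrel : ∀ (g : K) (h : H),
      x (γ g * h * (γ' g)⁻¹)
        = (ρ g : Matrix (Fin a) (Fin a) ℂ) * x h * star (ρ' g : Matrix (Fin a') (Fin a') ℂ)) :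
    ∃ (haa' : a = a') (h₀ : H) (c : ℂ) (U : Matrix (Fin a) (Fin a) ℂ),
      c ≠ 0 ∧ U ∈ Matrix.unitaryGroup (Fin a) ℂ ∧
      {h : H | x h ≠ 0} = {h₀} ∧
      x h₀ = c • U.submatrix id (Fin.cast haa'.symm) ∧
      (∀ g : K, γ g * h₀ = h₀ * γ' g) ∧
      (∀ g : K, (ρ g : Matrix (Fin a) (Fin a) ℂ) * U
        = U * ((ρ' g : Matrix (Fin a') (Fin a') ℂ).submatrix
            (Fin.cast haa') (Fin.cast haa'))) := by
  classical
  -- the twisted action of K on H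
  letI : SMul K H := ⟨fun g h => γ g * h * (γ' g)⁻¹⟩
  have smul_def : ∀ (g : K) (h : H), g • h = γ g * h * (γ' g)⁻¹ := fun _ _ => rfl
  letI : MulAction K H :=
    { one_smul := by intro h; rw [smul_def]; simp
      mul_smul := by
        intro g g' h
        rw [smul_def, smul_def, smul_def]
        simp [_root_.map_mul, mul_assoc] }
  -- the squared Frobenius norm
  set N : H → ℝ := fun h => ∑ i, ∑ j, ‖x h i j‖ ^ 2 with hNdef
  have hN0 : ∀ h, N h = 0 → x h = 0 := by
    intro h hh
    have h1 : ∀ i ∈ (Finset.univ : Finset (Fin a)), (∑ j, ‖x h i j‖ ^ 2) = 0 := by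
      refine (Finset.sum_eq_zero_iff_of_nonneg ?_).mp hh
      intro i _
      exact Finset.sum_nonneg fun j _ => sq_nonneg _
    ext i j
    have h2 := (Finset.sum_eq_zero_iff_of_nonneg (fun j _ => sq_nonneg _)).mp
      (h1 i (Finset.mem_univ i)) j (Finset.mem_univ j)
    have : ‖x h i j‖ = 0 := by nlinarith [norm_nonneg (x h i j)]
    simpa using norm_eq_zero.mp this
  have hNpos : ∀ h, x h ≠ 0 → 0 < N h := by
    intro h hh
    rcases lt_or_eq_of_le (Finset.sum_nonneg fun i _ =>
      Finset.sum_nonneg fun j _ => sq_nonneg (‖x h i j‖)) with h1 | h1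
    · exact h1
    · exact absurd (hN0 h h1.symm) hh
  have hxsmul : ∀ (g : K) (h : H),
      x (g • h) = (ρ g : Matrix (Fin a) (Fin a) ℂ) * x h
        * star (ρ' g : Matrix (Fin a') (Fin a') ℂ) := by
    intro g h; rw [smul_def]; exact hrel g h
  have hNinv : ∀ (g : K) (h : H), N (g • h) = N h := by
    intro g h
    show (∑ i, ∑ j, ‖x (g • h) i j‖ ^ 2) = ∑ i, ∑ j, ‖x h i j‖ ^ 2
    rw [hxsmul g h]
    exact normAux (x h) _ _ (ρ g).2 (ρ' g).2
  have hxinv : ∀ (g : K) (h : H), x h ≠ 0 → x (g • h) ≠ 0 := by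
    intro g h hh hc
    have : N (g • h) = 0 := by rw [hNdef]; simp [hc]
    rw [hNinv g h] at this
    exact absurd this (ne_of_gt (hNpos h hh))
  -- superlevel sets of N are finite
  have hfin : ∀ ε : ℝ, 0 < ε → {h : H | ε ≤ N h}.Finite := by
    intro ε hε
    have h1 : ∀ᶠ h in Filter.cofinite, dist (N h) 0 < ε :=
      Metric.tendsto_nhds.mp hsum.tendsto_cofinite_zero ε hε
    refine (Filter.eventually_cofinite.mp h1).subset ?_
    intro h hh
    simp only [Set.mem_setOf_eq, Real.dist_eq, sub_zero, not_lt]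
    calc ε ≤ N h := hh
      _ ≤ |N h| := le_abs_self _
  -- stabilizers have finite index
  have hstab : ∀ h : H, x h ≠ 0 → (MulAction.stabilizer K h).FiniteIndex := by
    intro h hh
    have horb : (MulAction.orbit K h).Finite := by
      refine (hfin (N h) (hNpos h hh)).subset ?_
      rintro _ ⟨g, rfl⟩
      exact le_of_eq (hNinv g h).symm
    haveI := horb.to_subtype
    haveI : Finite (K ⧸ MulAction.stabilizer K h) :=
      Finite.of_equiv _ (MulAction.orbitEquivQuotientStabilizer K h)
    exact Subgroup.finiteIndex_of_finite_quotient
  -- any two support points coincide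
  have huniq : ∀ h₁ h₂ : H, x h₁ ≠ 0 → x h₂ ≠ 0 → h₁ = h₂ := by
    intro h₁ h₂ hh₁ hh₂
    haveI := hstab h₁ hh₁
    haveI := hstab h₂ hh₂
    set L : Subgroup K := MulAction.stabilizer K h₁ ⊓ MulAction.stabilizer K h₂ with hLdef
    haveI : L.FiniteIndex := inferInstance
    set d : H := h₂⁻¹ * h₁ with hddef
    by_contra hne
    have hd1 : d ≠ 1 := by
      intro hd
      rw [hddef] at hd
      exact hne (inv_mul_eq_one.mp hd).symm
    have hcomm : ∀ c ∈ L.map γ', c * d = d * c := by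
      rintro _ ⟨g, hg, rfl⟩
      have hg₁ : γ g * h₁ * (γ' g)⁻¹ = h₁ := hg.1
      have hg₂ : γ g * h₂ * (γ' g)⁻¹ = h₂ := hg.2
      have e₁ : γ g * h₁ = h₁ * γ' g := by
        have := congrArg (· * γ' g) hg₁; simpa [mul_assoc] using this
      have e₂ : γ g * h₂ = h₂ * γ' g := by
        have := congrArg (· * γ' g) hg₂; simpa [mul_assoc] using this
      have e₂' : γ' g = h₂⁻¹ * (γ g * h₂) := by rw [e₂]; group
      rw [hddef]
      calc γ' g * (h₂⁻¹ * h₁) = h₂⁻¹ * (γ g * h₁) := by rw [e₂']; group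
        _ = h₂⁻¹ * (h₁ * γ' g) := by rw [e₁]
        _ = h₂⁻¹ * h₁ * γ' g := by group
    have hCfi : (L.map γ').FiniteIndex := mapFiniteIndexAux γ' hγ'inj hγ' L inferInstance
    exact absurd (conjClassFiniteAux (L.map γ') hCfi d hcomm) (hicc d hd1)
  -- the support point
  obtain ⟨h₀, hh₀⟩ : ∃ h₀ : H, x h₀ ≠ 0 := by
    by_contra hc
    push_neg at hc
    exact hxne (funext fun h => hc h)
  have hsupp : {h : H | x h ≠ 0} = {h₀} := by
    ext h
    simp only [Set.mem_setOf_eq, Set.mem_singleton_iff]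
    exact ⟨fun hh => huniq h h₀ hh hh₀, fun hh => hh ▸ hh₀⟩
  have hint : ∀ g : K, γ g * h₀ = h₀ * γ' g := by
    intro g
    have h1 : x (g • h₀) ≠ 0 := hxinv g h₀ hh₀
    have h2 : g • h₀ = h₀ := huniq _ _ h1 hh₀
    rw [smul_def] at h2
    have := congrArg (· * γ' g) h2
    simpa [mul_assoc] using this
  -- matrix part
  set M : Matrix (Fin a) (Fin a') ℂ := x h₀ with hMdef
  have hM0 : M ≠ 0 := hh₀
  have harg : ∀ g : K, γ g * h₀ * (γ' g)⁻¹ = h₀ := by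
    intro g; rw [hint g]; group
  have hMfix : ∀ g : K, (ρ g : Matrix (Fin a) (Fin a) ℂ) * M
      * star (ρ' g : Matrix (Fin a') (Fin a') ℂ) = M := by
    intro g; rw [hMdef, ← hrel g h₀, harg g]
  have hρ'1 : ∀ g : K, star (ρ' g : Matrix (Fin a') (Fin a') ℂ)
      * (ρ' g : Matrix (Fin a') (Fin a') ℂ) = 1 :=
    fun g => Matrix.mem_unitaryGroup_iff'.mp (ρ' g).2
  have hρ1 : ∀ g : K, (ρ g : Matrix (Fin a) (Fin a) ℂ)
      * star (ρ g : Matrix (Fin a) (Fin a) ℂ) = 1 :=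
    fun g => Matrix.mem_unitaryGroup_iff.mp (ρ g).2
  have hMr : ∀ g : K, (ρ g : Matrix (Fin a) (Fin a) ℂ) * M
      = M * (ρ' g : Matrix (Fin a') (Fin a') ℂ) := by
    intro g
    have := congrArg (· * (ρ' g : Matrix (Fin a') (Fin a') ℂ)) (hMfix g)
    simpa [Matrix.mul_assoc, hρ'1 g] using this
  have hρinv : ∀ g : K, ((ρ g⁻¹ : Matrix.unitaryGroup (Fin a) ℂ) : Matrix (Fin a) (Fin a) ℂ)
      = star (ρ g : Matrix (Fin a) (Fin a) ℂ) := by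
    intro g; rw [map_inv]; rfl
  have hρ'inv : ∀ g : K, ((ρ' g⁻¹ : Matrix.unitaryGroup (Fin a') ℂ) : Matrix (Fin a') (Fin a') ℂ)
      = star (ρ' g : Matrix (Fin a') (Fin a') ℂ) := by
    intro g; rw [map_inv]; rfl
  have hMl : ∀ g : K, (ρ' g : Matrix (Fin a') (Fin a') ℂ) * Mᴴ
      = Mᴴ * (ρ g : Matrix (Fin a) (Fin a) ℂ) := by
    intro g
    have E := congrArg Matrix.conjTranspose (hMr g⁻¹)
    rw [Matrix.conjTranspose_mul, Matrix.conjTranspose_mul] at E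
    rw [← Matrix.star_eq_conjTranspose ((ρ g⁻¹ : Matrix.unitaryGroup (Fin a) ℂ) : Matrix (Fin a) (Fin a) ℂ),
      ← Matrix.star_eq_conjTranspose ((ρ' g⁻¹ : Matrix.unitaryGroup (Fin a') ℂ) : Matrix (Fin a') (Fin a') ℂ),
      hρinv, hρ'inv, star_star, star_star] at E
    exact E.symm
  have hTcomm : ∀ g : K, (ρ g : Matrix (Fin a) (Fin a) ℂ) * (M * Mᴴ)
      = (M * Mᴴ) * (ρ g : Matrix (Fin a) (Fin a) ℂ) := by
    intro g
    calc (ρ g : Matrix (Fin a) (Fin a) ℂ) * (M * Mᴴ)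
        = ((ρ g : Matrix (Fin a) (Fin a) ℂ) * M) * Mᴴ := by rw [Matrix.mul_assoc]
      _ = M * ((ρ' g : Matrix (Fin a') (Fin a') ℂ) * Mᴴ) := by rw [hMr g, Matrix.mul_assoc]
      _ = (M * Mᴴ) * (ρ g : Matrix (Fin a) (Fin a) ℂ) := by rw [hMl g, ← Matrix.mul_assoc]
  obtain ⟨c, hc⟩ := hirr (M * Mᴴ) hTcomm
  have hT'comm : ∀ g : K, (ρ' g : Matrix (Fin a') (Fin a') ℂ) * (Mᴴ * M)
      = (Mᴴ * M) * (ρ' g : Matrix (Fin a') (Fin a') ℂ) := by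
    intro g
    calc (ρ' g : Matrix (Fin a') (Fin a') ℂ) * (Mᴴ * M)
        = ((ρ' g : Matrix (Fin a') (Fin a') ℂ) * Mᴴ) * M := by rw [Matrix.mul_assoc]
      _ = Mᴴ * ((ρ g : Matrix (Fin a) (Fin a) ℂ) * M) := by rw [hMl g, Matrix.mul_assoc]
      _ = (Mᴴ * M) * (ρ' g : Matrix (Fin a') (Fin a') ℂ) := by rw [hMr g, ← Matrix.mul_assoc]
  obtain ⟨c', hc'⟩ := hirr' (Mᴴ * M) hT'comm
  have hcc' : c = c' := by
    have e : c • M = c' • M := by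
      calc c • M = (c • (1 : Matrix (Fin a) (Fin a) ℂ)) * M := by
            rw [Matrix.smul_mul, Matrix.one_mul]
        _ = (M * Mᴴ) * M := by rw [← hc]
        _ = M * (Mᴴ * M) := by rw [Matrix.mul_assoc]
        _ = M * (c' • (1 : Matrix (Fin a') (Fin a') ℂ)) := by rw [← hc']
        _ = c' • M := by rw [Matrix.mul_smul, Matrix.mul_one]
    have e2 : (c - c') • M = 0 := by rw [sub_smul, e, sub_self]
    rcases smul_eq_zero.mp e2 with h | h
    · exact sub_eq_zero.mp h
    · exact absurd h hM0
  have hNM : N h₀ = ∑ i, ∑ j, ‖M i j‖ ^ 2 := by rw [hNdef]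
  have htrN : Matrix.trace (M * Mᴴ) = ((N h₀ : ℝ) : ℂ) := by rw [traceAux M, hNM]
  have htr1 : Matrix.trace (M * Mᴴ) = c * a := by
    rw [hc, Matrix.trace_smul, Matrix.trace_one]
    simp [smul_eq_mul]
  have htr2 : Matrix.trace (Mᴴ * M) = c' * a' := by
    rw [hc', Matrix.trace_smul, Matrix.trace_one]
    simp [smul_eq_mul]
  have hNc : c * a = ((N h₀ : ℝ) : ℂ) := htr1.symm.trans htrN
  have hc0 : c ≠ 0 := by
    intro h
    rw [h, zero_mul] at hNc
    have : (N h₀ : ℝ) = 0 := by exact_mod_cast hNc.symm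
    exact (ne_of_gt (hNpos h₀ hh₀)) this
  have haa' : a = a' := by
    have e : c * a = c * a' := by
      rw [← htr1, Matrix.trace_mul_comm, htr2, hcc']
    have := mul_left_cancel₀ hc0 e
    exact_mod_cast this
  -- the unitary
  set q : ℝ := N h₀ / a with hqdef
  have hq : 0 < q := div_pos (hNpos h₀ hh₀) (by exact_mod_cast ha)
  set s : ℝ := Real.sqrt q with hsdef
  have hs : 0 < s := Real.sqrt_pos.mpr hq
  have hs0 : ((s : ℝ) : ℂ) ≠ 0 := by exact_mod_cast hs.ne'
  have hcq : c = ((q : ℝ) : ℂ) := by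
    have haC : ((a : ℕ) : ℂ) ≠ 0 := by exact_mod_cast ha.ne'
    apply mul_right_cancel₀ haC
    rw [hNc, hqdef]
    push_cast
    field_simp
  have hs2 : ((s : ℝ) : ℂ) ^ 2 = c := by
    rw [hcq, hsdef, ← Complex.ofReal_pow, Real.sq_sqrt hq.le]
  have hstars : star ((s : ℝ) : ℂ) = ((s : ℝ) : ℂ) := by
    rw [Complex.star_def, Complex.conj_ofReal]
  set e : Fin a ≃ Fin a' := finCongr haa' with hedef
  have hecoe : ⇑e = Fin.cast haa' := rfl
  have hecoe' : ⇑e.symm = Fin.cast haa'.symm := rfl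
  set Msq : Matrix (Fin a) (Fin a) ℂ := M.submatrix id ⇑e with hMsqdef
  have hMsqT : Msqᴴ = Mᴴ.submatrix ⇑e id := by
    ext i j
    simp [hMsqdef, Matrix.conjTranspose_apply]
  have hsq1 : Msq * Msqᴴ = M * Mᴴ := by
    rw [hMsqdef, hMsqT, Matrix.submatrix_mul_equiv M Mᴴ id e id, Matrix.submatrix_id_id]
  have hsq2 : Msqᴴ * Msq = c • (1 : Matrix (Fin a) (Fin a) ℂ) := by
    rw [hMsqdef, hMsqT]
    have : Mᴴ.submatrix ⇑e id * M.submatrix id ⇑e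
        = (Mᴴ * M).submatrix ⇑e ⇑e := by
      have := Matrix.submatrix_mul_equiv Mᴴ M ⇑e (Equiv.refl (Fin a)) ⇑e
      simpa using this
    rw [this, hc', ← hcc']
    have h1 : ((c • (1 : Matrix (Fin a') (Fin a') ℂ)).submatrix ⇑e ⇑e)
        = c • ((1 : Matrix (Fin a') (Fin a') ℂ)).submatrix ⇑e ⇑e := rfl
    rw [h1, Matrix.submatrix_one_equiv e]
  set U : Matrix (Fin a) (Fin a) ℂ := (((s : ℝ) : ℂ))⁻¹ • Msq with hUdef
  have hUstar : star U = (((s : ℝ) : ℂ))⁻¹ • Msqᴴ := by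
    rw [hUdef, star_smul, star_inv₀, hstars, Matrix.star_eq_conjTranspose]
  have hUunit : U ∈ Matrix.unitaryGroup (Fin a) ℂ := by
    rw [Matrix.mem_unitaryGroup_iff', hUstar, hUdef, smul_mul_smul_comm, hsq2, smul_smul,
      ← mul_inv, ← sq, hs2, inv_mul_cancel₀ hc0, one_smul]
  refine ⟨haa', h₀, ((s : ℝ) : ℂ), U, hs0, hUunit, hsupp, ?_, hint, ?_⟩
  · -- x h₀ = s • U.submatrix id (Fin.cast haa'.symm)
    have h1 : U.submatrix id (Fin.cast haa'.symm)
        = (((s : ℝ) : ℂ))⁻¹ • (Msq.submatrix id (Fin.cast haa'.symm)) := by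
      ext i j; simp [hUdef]
    have h2 : Msq.submatrix id (Fin.cast haa'.symm) = M := by
      rw [hMsqdef, Matrix.submatrix_submatrix]
      have : (⇑e ∘ Fin.cast haa'.symm) = id := by
        funext j; apply Fin.ext; simp [hecoe]
      rw [this]
      simpa using Matrix.submatrix_id_id M
    rw [h1, h2, smul_smul, mul_inv_cancel₀ hs0, one_smul]
  · -- intertwining of U
    intro g
    have h3 : (ρ g : Matrix (Fin a) (Fin a) ℂ) * Msq
        = ((ρ g : Matrix (Fin a) (Fin a) ℂ) * M).submatrix id ⇑e := by
      have := Matrix.submatrix_mul_equiv (ρ g : Matrix (Fin a) (Fin a) ℂ) M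
        id (Equiv.refl (Fin a)) ⇑e
      simpa [hMsqdef] using this
    have h4 : Msq * ((ρ' g : Matrix (Fin a') (Fin a') ℂ)).submatrix ⇑e ⇑e
        = (M * (ρ' g : Matrix (Fin a') (Fin a') ℂ)).submatrix id ⇑e := by
      rw [hMsqdef]
      exact Matrix.submatrix_mul_equiv M (ρ' g : Matrix (Fin a') (Fin a') ℂ) id e ⇑e
    rw [hUdef, Matrix.mul_smul, Matrix.smul_mul, ← hecoe]
    rw [h3, h4, hMr g]
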